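/- Let λ be a real number. If some derivation of the Lie algebra rh₃ = h₃ × ℝ has characteristic polynomial X²·(X² − 2λX + (λ² + 1)), then λ = 0. -/

import Mathlib

set_option linter.unusedTactic false
set_option linter.unnecessarySeqFocus false
set_option linter.unreachableTactic false

open Polynomial

/-- The 3-dimensional Heisenberg Lie algebra `h₃`: the real vector space `Fin 3 → ℝ`
with basis `e₁, e₂, e₃` and only nonzero bracket `⁅e₁, e₂⁆ = e₃`. -/
def H3 : Type := Fin 3 → ℝ

noncomputable instance : AddCommGroup H3 := Pi.addCommGroup
noncomputable instance : Module ℝ H3 := Pi.module _ _ _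
instance : FiniteDimensional ℝ H3 := inferInstanceAs (FiniteDimensional ℝ (Fin 3 → ℝ))

lemma H3.add_apply (x y : H3) (i : Fin 3) : (x + y) i = x i + y i := rfl
lemma H3.smul_apply (r : ℝ) (x : H3) (i : Fin 3) : (r • x) i = r * x i := rfl

noncomputable instance : LieRing H3 :=
  { (inferInstance : AddCommGroup H3) with
    bracket := fun x y => ![0, 0, x 0 * y 1 - x 1 * y 0]
    add_lie := by
      intro x y z
      show (![_,_,_] : Fin 3 → ℝ) = ![_,_,_] + ![_,_,_]
      funext i
      fin_cases i <;> simp [H3.add_apply] <;> erw [H3.add_apply] <;> simp <;> ring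
    lie_add := by
      intro x y z
      show (![_,_,_] : Fin 3 → ℝ) = ![_,_,_] + ![_,_,_]
      funext i
      fin_cases i <;> simp [H3.add_apply] <;> erw [H3.add_apply] <;> simp <;> ring
    lie_self := by
      intro x
      show (![_,_,_] : Fin 3 → ℝ) = 0
      funext i
      fin_cases i <;> simp <;> ring
    leibniz_lie := by
      intro x y z
      show (![_,_,_] : Fin 3 → ℝ) = ![_,_,_] + ![_,_,_]
      funext i
      fin_cases i <;> simp [H3.add_apply] <;> erw [H3.add_apply] <;> simp <;> ring }

noncomputable instance : LieAlgebra ℝ H3 :=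
  { lie_smul := by
      intro r x y
      show (![_,_,_] : Fin 3 → ℝ) = r • ![_,_,_]
      funext i
      fin_cases i <;> simp [H3.smul_apply] <;> erw [H3.smul_apply] <;> simp <;> ring }

/-- `rh₃ := h₃ × ℝ`, the product Lie algebra of the Heisenberg Lie algebra `h₃` with the
1-dimensional abelian Lie algebra `ℝ`. -/
def RH3 : Type := H3 × ℝ

noncomputable instance : AddCommGroup RH3 := inferInstanceAs (AddCommGroup (H3 × ℝ))
noncomputable instance : Module ℝ RH3 := inferInstanceAs (Module ℝ (H3 × ℝ))
instance : FiniteDimensional ℝ RH3 := inferInstanceAs (FiniteDimensional ℝ (H3 × ℝ))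

noncomputable instance : LieRing RH3 :=
  { (inferInstance : AddCommGroup RH3) with
    bracket := fun x y => (⁅x.1, y.1⁆, 0)
    add_lie := by
      intro x y z
      show (⁅x.1 + y.1, z.1⁆, (0:ℝ)) = (⁅x.1, z.1⁆ + ⁅y.1, z.1⁆, 0 + 0)
      simp [add_lie]
    lie_add := by
      intro x y z
      show (⁅x.1, y.1 + z.1⁆, (0:ℝ)) = (⁅x.1, y.1⁆ + ⁅x.1, z.1⁆, 0 + 0)
      simp [lie_add]
    lie_self := by
      intro x
      show (⁅x.1, x.1⁆, (0:ℝ)) = (0, 0)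
      simp
    leibniz_lie := by
      intro x y z
      show (⁅x.1, ⁅y.1, z.1⁆⁆, (0:ℝ)) = (⁅⁅x.1, y.1⁆, z.1⁆ + ⁅y.1, ⁅x.1, z.1⁆⁆, 0 + 0)
      rw [← leibniz_lie]
      simp }

noncomputable instance : LieAlgebra ℝ RH3 :=
  { lie_smul := by
      intro r x y
      show (⁅x.1, r • y.1⁆, (0:ℝ)) = (r • ⁅x.1, y.1⁆, r • (0:ℝ))
      simp }


section Aux

/-- Basis vectors of `rh₃`. -/
noncomputable def E3 (j : Fin 3) : RH3 := (Pi.single j 1, 0)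

noncomputable def E4 : RH3 := (0, 1)

lemma RH3.bracket_eq (x y : RH3) :
    ⁅x, y⁆ = ((![0, 0, x.1 0 * y.1 1 - x.1 1 * y.1 0] : Fin 3 → ℝ), (0 : ℝ)) := rfl

lemma RH3.add_eq (x y : RH3) : x + y = (x.1 + y.1, x.2 + y.2) := rfl

lemma RH3.zero_eq : (0 : RH3) = (0, 0) := rfl

lemma H3.zero_apply (i : Fin 3) : (0 : H3) i = 0 := rfl

/-- The index equivalence `Fin 3 ⊕ Unit ≃ Fin 4`. -/
def rh3Equiv : Fin 3 ⊕ Unit ≃ Fin 4 where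
  toFun x := Sum.elim (fun i => i.castSucc) (fun _ => 3) x
  invFun i := if h : (i : ℕ) < 3 then Sum.inl ⟨i, h⟩ else Sum.inr ()
  left_inv := by decide
  right_inv := by decide

lemma eval_charpoly_mat {n : Type*} [DecidableEq n] [Fintype n]
    (A : Matrix n n ℝ) (t : ℝ) :
    Polynomial.eval t A.charpoly =
      (Matrix.of fun i j => (if i = j then t else 0) - A i j).det := by
  rw [Matrix.charpoly, ← Polynomial.coe_evalRingHom, RingHom.map_det]
  congr 1
  ext i j
  rcases eq_or_ne i j with rfl | hij
  · simp [Matrix.charmatrix_apply_eq]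
  · simp [Matrix.charmatrix_apply_ne _ _ _ hij, hij]

end Aux

set_option maxHeartbeats 1000000 in
/-- If some derivation of `rh₃ = h₃ × ℝ` has characteristic polynomial
`X² * (X² - 2λX + (λ² + 1))`, then `λ = 0`. -/
theorem charpoly_derivation_rh3_complex_eigenvalues (lam : ℝ)
    (h : ∃ D : LieDerivation ℝ RH3 RH3,
      LinearMap.charpoly D.toLinearMap
        = X ^ 2 * (X ^ 2 - C (2 * lam) * X + C (lam ^ 2 + 1))) :
    lam = 0 := by
  obtain ⟨D, hD⟩ := h
  -- the product basis of `rh₃`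
  let b : Module.Basis (Fin 3 ⊕ Unit) ℝ RH3 :=
    (Pi.basisFun ℝ (Fin 3)).prod (Module.Basis.singleton Unit ℝ)
  have hb_inl : ∀ j : Fin 3, b (Sum.inl j) = E3 j := by
    intro j
    refine Prod.ext ?_ ?_
    · exact ((Pi.basisFun ℝ (Fin 3)).prod_apply_inl_fst (Module.Basis.singleton Unit ℝ) j).trans
        (Pi.basisFun_apply ℝ (Fin 3) j)
    · exact (Pi.basisFun ℝ (Fin 3)).prod_apply_inl_snd (Module.Basis.singleton Unit ℝ) j
  have hb_inr : b (Sum.inr ()) = E4 := by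
    refine Prod.ext ?_ ?_
    · exact (Pi.basisFun ℝ (Fin 3)).prod_apply_inr_fst (Module.Basis.singleton Unit ℝ) ()
    · exact ((Pi.basisFun ℝ (Fin 3)).prod_apply_inr_snd (Module.Basis.singleton Unit ℝ) ()).trans
        (Module.Basis.singleton_apply Unit ℝ ())
  have hrepr_inl : ∀ (x : RH3) (i : Fin 3), b.repr x (Sum.inl i) = x.1 i := by
    intro x i
    exact ((Pi.basisFun ℝ (Fin 3)).prod_repr_inl (Module.Basis.singleton Unit ℝ) x i).trans
      (Pi.basisFun_repr ℝ (Fin 3) x.1 i)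
  have hrepr_inr : ∀ (x : RH3), b.repr x (Sum.inr ()) = x.2 := by
    intro x
    exact ((Pi.basisFun ℝ (Fin 3)).prod_repr_inr (Module.Basis.singleton Unit ℝ) x ()).trans
      (Module.Basis.singleton_repr Unit ℝ x.2 ())
  -- bracket relations among basis vectors
  have hE12 : ⁅E3 0, E3 1⁆ = E3 2 := by
    rw [RH3.bracket_eq]
    refine Prod.ext ?_ rfl
    funext i
    fin_cases i <;> simp [E3, Pi.single_apply]
  have hE04 : ⁅E3 0, E4⁆ = 0 := by
    rw [RH3.bracket_eq, RH3.zero_eq]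
    refine Prod.ext ?_ rfl
    funext i
    fin_cases i <;> simp [E3, E4, Pi.single_apply, H3.zero_apply]
  have hE14 : ⁅E3 1, E4⁆ = 0 := by
    rw [RH3.bracket_eq, RH3.zero_eq]
    refine Prod.ext ?_ rfl
    funext i
    fin_cases i <;> simp [E3, E4, Pi.single_apply, H3.zero_apply]
  -- names for the matrix entries of D
  set a : ℝ := (D (E3 0)).1 0 with ha
  set b1 : ℝ := (D (E3 0)).1 1 with hb1
  set p : ℝ := (D (E3 0)).1 2 with hp
  set q : ℝ := (D (E3 0)).2 with hq
  set c : ℝ := (D (E3 1)).1 0 with hc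
  set d : ℝ := (D (E3 1)).1 1 with hd
  set r : ℝ := (D (E3 1)).1 2 with hr
  set s : ℝ := (D (E3 1)).2 with hs0
  set u : ℝ := (D E4).1 2 with hu
  set v : ℝ := (D E4).2 with hv0
  -- constraints coming from the derivation property
  have hF2 : D (E3 2) = ((![0, 0, a + d] : Fin 3 → ℝ), (0 : ℝ)) := by
    have hh := D.apply_lie_eq_add (E3 0) (E3 1)
    rw [hE12] at hh
    rw [hh, RH3.add_eq, RH3.bracket_eq, RH3.bracket_eq]
    refine Prod.ext ?_ (by norm_num)
    funext i
    fin_cases i <;>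
      simp [E3, Pi.single_apply, H3.add_apply, ha, hd] <;> erw [H3.add_apply] <;> simp <;> ring_nf
  have hF40 : (D E4).1 0 = 0 := by
    have hh := D.apply_lie_eq_add (E3 1) E4
    rw [hE14, map_zero] at hh
    have h1 := congrFun (congrArg Prod.fst hh) 2
    rw [RH3.add_eq, RH3.bracket_eq, RH3.bracket_eq] at h1
    simp [RH3.zero_eq, E3, E4, Pi.single_apply,
      H3.add_apply, H3.zero_apply] at h1
    erw [H3.add_apply] at h1
    simp at h1
    rw [show (E4 : RH3) = ((0 : H3), (1 : ℝ)) from rfl]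
    linarith
  have hF41 : (D E4).1 1 = 0 := by
    have hh := D.apply_lie_eq_add (E3 0) E4
    rw [hE04, map_zero] at hh
    have h1 := congrFun (congrArg Prod.fst hh) 2
    rw [RH3.add_eq, RH3.bracket_eq, RH3.bracket_eq] at h1
    simp [RH3.zero_eq, E3, E4, Pi.single_apply,
      H3.add_apply, H3.zero_apply] at h1
    erw [H3.add_apply] at h1
    simp at h1
    rw [show (E4 : RH3) = ((0 : H3), (1 : ℝ)) from rfl]
    linarith
  -- the matrix of D in the chosen basis
  rw [← LinearMap.charpoly_toMatrix D.toLinearMap b] at hD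
  set A : Matrix (Fin 3 ⊕ Unit) (Fin 3 ⊕ Unit) ℝ := LinearMap.toMatrix b b D.toLinearMap with hA
  have hBcp : (Matrix.reindex rh3Equiv rh3Equiv A).charpoly
      = X ^ 2 * (X ^ 2 - C (2 * lam) * X + C (lam ^ 2 + 1)) := by
    rw [Matrix.charpoly_reindex]; exact hD
  have hent : Matrix.reindex rh3Equiv rh3Equiv A
      = !![a, c, 0, 0; b1, d, 0, 0; p, r, a + d, u; q, s, 0, v] := by
    have hsymm : ⇑rh3Equiv.symm = ![Sum.inl 0, Sum.inl 1, Sum.inl 2, Sum.inr ()] := by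
      funext i; fin_cases i <;> decide
    have hz : b.repr (((![0, 0, a + d] : Fin 3 → ℝ), (0 : ℝ)) : RH3) (Sum.inr ()) = 0 :=
      hrepr_inr _
    ext i j
    fin_cases i <;> fin_cases j <;>
      simp [hA, Matrix.reindex_apply, Matrix.submatrix_apply, LinearMap.toMatrix_apply,
        hsymm, hb_inl, hb_inr, hrepr_inl, hrepr_inr,
        hF2, hF40, hF41, hrepr_inl ((![0, 0, a + d] : Fin 3 → ℝ), (0 : ℝ)),
        hz]
    on_goal 13 => exact hz
    all_goals rfl
  have key : ∀ t : ℝ, ((t - a) * (t - d) - c * b1) * (t - (a + d)) * (t - v)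
      = t ^ 2 * (t ^ 2 - 2 * lam * t + (lam ^ 2 + 1)) := by
    intro t
    have h1 := congrArg (Polynomial.eval t) hBcp
    rw [hent, eval_charpoly_mat] at h1
    rw [show (Matrix.of fun i j => (if i = j then t else 0)
        - (!![a, c, 0, 0; b1, d, 0, 0; p, r, a + d, u; q, s, 0, v]) i j)
        = !![t - a, -c, 0, 0; -b1, t - d, 0, 0; -p, -r, t - (a + d), -u;
            -q, -s, 0, t - v] from by
      ext i j
      fin_cases i <;> fin_cases j <;> simp] at h1
    simp [Matrix.det_succ_row_zero, Fin.sum_univ_succ, Fin.succAbove,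
      Fin.castSucc, Fin.castAdd, Fin.castLE, Matrix.submatrix_apply] at h1
    linear_combination h1
  have hsum : a + d = 0 := by
    have h0 : (a + d) ^ 2 * ((a + d - lam) ^ 2 + 1) = 0 := by
      linear_combination -key (a + d)
    have h2 : (a + d) ^ 2 = 0 := by
      rcases mul_eq_zero.mp h0 with h | h
      · exact h
      · nlinarith [sq_nonneg (a + d - lam)]
    exact pow_eq_zero_iff (by norm_num : (2 : ℕ) ≠ 0) |>.mp h2
  have hveq : v = 0 := by
    have h0 : v ^ 2 * ((v - lam) ^ 2 + 1) = 0 := by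
      linear_combination -key v
    have h2 : v ^ 2 = 0 := by
      rcases mul_eq_zero.mp h0 with h | h
      · exact h
      · nlinarith [sq_nonneg (v - lam)]
    exact pow_eq_zero_iff (by norm_num : (2 : ℕ) ≠ 0) |>.mp h2
  have hdeq : d = -a := by linarith
  have h1 := key 1
  have h2 := key (-1)
  rw [hveq, hdeq] at h1 h2
  ring_nf at h1 h2
  linarith [h1, h2]
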